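/- Suppose for each t ∈ [T], π_t maximizes π ↦ F(π) - λ_t·G(π) over Π, where λ_t ≥ 0, and suppose π° ∈ Π satisfies G(π°) ≤ b'. If F and G are linear under mixtures and π̄ = (1/T)Σ_t π_t, then F(π°) - F(π̄) ≤ (1/T)·Σ_{t=1}^T λ_t·(b' - G(π_t)). -/

import Mathlib

/-- Optimization error of the averaged primal iterates: if each `pt t` maximizes the
Lagrangian `F - λ_t·G` and `p0` is feasible (`G p0 ≤ b'`), then the average policy
`pbar` satisfies `F p0 - F pbar ≤ (1/T)·Σ_t λ_t·(b' - G (pt t))`. -/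
theorem stmt_11 {P : Type*} (F G : P → ℝ) (b' : ℝ) (T : ℕ) (hT : 1 ≤ T)
    (lam : Fin T → ℝ) (pt : Fin T → P) (p0 pbar : P)
    (hlam : ∀ t, 0 ≤ lam t)
    (hmax : ∀ t, ∀ p : P, F p - lam t * G p ≤ F (pt t) - lam t * G (pt t))
    (hfeas : G p0 ≤ b')
    (hmixF : F pbar = (1 / (T : ℝ)) * ∑ t, F (pt t))
    (hmixG : G pbar = (1 / (T : ℝ)) * ∑ t, G (pt t)) :
    F p0 - F pbar ≤ (1 / (T : ℝ)) * ∑ t, lam t * (b' - G (pt t)) := by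
  have hTpos : (0:ℝ) < T := by exact_mod_cast hT
  have key : ∀ t, F p0 - F (pt t) ≤ lam t * (b' - G (pt t)) := by
    intro t
    have h1 := hmax t p0
    have h2 : lam t * (G p0 - G (pt t)) ≤ lam t * (b' - G (pt t)) :=
      mul_le_mul_of_nonneg_left (by linarith) (hlam t)
    nlinarith
  have hsum : ∑ t, (F p0 - F (pt t)) ≤ ∑ t, lam t * (b' - G (pt t)) :=
    Finset.sum_le_sum fun t _ => key t
  have hlhs : ∑ t, (F p0 - F (pt t)) = T * F p0 - ∑ t, F (pt t) := by
    simp [Finset.sum_sub_distrib, mul_comm]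
  rw [hmixF]
  have h3 : (1 / (T : ℝ)) * (T * F p0 - ∑ t, F (pt t)) ≤
      (1 / (T : ℝ)) * ∑ t, lam t * (b' - G (pt t)) := by
    apply mul_le_mul_of_nonneg_left _ (by positivity)
    rw [← hlhs]; exact hsum
  calc F p0 - (1 / (T : ℝ)) * ∑ t, F (pt t)
      = (1 / (T : ℝ)) * (T * F p0 - ∑ t, F (pt t)) := by
        field_simp
    _ ≤ _ := h3
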